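/- Let k ≥ 2 and let a₁, a₂, …, a_k be real numbers. Then max(a₁,a₂) + max(a₂,a₃) + … + max(a_{k-1},a_k) ≥ (a₁ + a₂ + … + a_k) · (k-1)/k. -/

import Mathlib

open scoped BigOperators

/-- for reals `a₁, …, a_k` (`k ≥ 2`),
`max(a₁,a₂) + max(a₂,a₃) + … + max(a_{k-1},a_k) ≥ (a₁ + ⋯ + a_k)·(k-1)/k`. -/
theorem sum_max_consecutive_ge (k : ℕ) (hk : 2 ≤ k) (a : Fin k → ℝ) :
    (∑ i, a i) * (k - 1) / k ≤
      ∑ b : Fin (k - 1),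
        max (a ⟨b.val, lt_of_lt_of_le b.isLt (Nat.sub_le k 1)⟩)
          (a ⟨b.val + 1, by have := b.isLt; omega⟩) := by
  have hk0 : (0:ℝ) < k := by positivity
  obtain ⟨m, -, hm⟩ := Finset.exists_min_image Finset.univ a
    ⟨⟨0, by omega⟩, Finset.mem_univ _⟩
  set A : ℕ → ℝ := fun i => if h : i < k then a ⟨i, h⟩ else 0 with hA
  have hAeq : ∀ (i : ℕ) (h : i < k), A i = a ⟨i, h⟩ := fun i h => dif_pos h
  -- rewrite both sums over ranges of naturals
  have hS : (∑ i, a i) = ∑ i ∈ Finset.range k, A i := by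
    rw [← Fin.sum_univ_eq_sum_range A k]
    exact Finset.sum_congr rfl fun i _ => (hAeq i.val i.isLt).symm
  have hM : (∑ b : Fin (k - 1),
        max (a ⟨b.val, lt_of_lt_of_le b.isLt (Nat.sub_le k 1)⟩)
          (a ⟨b.val + 1, by have := b.isLt; omega⟩))
      = ∑ i ∈ Finset.range (k-1), max (A i) (A (i+1)) := by
    rw [← Fin.sum_univ_eq_sum_range (fun i => max (A i) (A (i+1))) (k-1)]
    refine Finset.sum_congr rfl fun b _ => ?_
    rw [hAeq b.val (lt_of_lt_of_le b.isLt (Nat.sub_le k 1)),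
        hAeq (b.val + 1) (by have := b.isLt; omega)]
  -- key identity: sum of selected terms equals total sum minus minimum
  have key : (∑ i ∈ Finset.range (k-1), (if i < m.val then A i else A (i+1))) + A m.val
      = ∑ i ∈ Finset.range k, A i := by
    rw [Finset.range_eq_Ico, Finset.range_eq_Ico,
        ← Finset.sum_Ico_consecutive _ (Nat.zero_le m.val)
          (by omega : m.val ≤ k-1),
        ← Finset.sum_Ico_consecutive _ (Nat.zero_le m.val) (le_of_lt m.isLt)]
    have h1 : ∑ i ∈ Finset.Ico 0 m.val, (if i < m.val then A i else A (i+1))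
        = ∑ i ∈ Finset.Ico 0 m.val, A i :=
      Finset.sum_congr rfl fun i hi => if_pos (Finset.mem_Ico.mp hi).2
    have h2 : ∑ i ∈ Finset.Ico m.val (k-1), (if i < m.val then A i else A (i+1))
        = ∑ i ∈ Finset.Ico m.val (k-1), A (i+1) :=
      Finset.sum_congr rfl fun i hi =>
        if_neg (Nat.not_lt.mpr (Finset.mem_Ico.mp hi).1)
    rw [h1, h2, Finset.sum_eq_sum_Ico_succ_bot m.isLt]
    have h3 : ∑ i ∈ Finset.Ico m.val (k-1), A (i+1)
        = ∑ i ∈ Finset.Ico (m.val+1) k, A i := by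
      rw [Finset.sum_Ico_eq_sum_range, Finset.sum_Ico_eq_sum_range]
      have hn : k - 1 - m.val = k - (m.val + 1) := by omega
      rw [hn]
      exact Finset.sum_congr rfl fun i _ => by congr 1; omega
    rw [h3]; ring
  -- each max dominates the selected term
  have hsel : (∑ i ∈ Finset.range (k-1), (if i < m.val then A i else A (i+1)))
      ≤ ∑ i ∈ Finset.range (k-1), max (A i) (A (i+1)) := by
    refine Finset.sum_le_sum fun i _ => ?_
    split
    · exact le_max_left _ _
    · exact le_max_right _ _
  -- min is at most average
  have hmin : (k : ℝ) * A m.val ≤ ∑ i ∈ Finset.range k, A i := by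
    rw [← hS]
    rw [hAeq m.val m.isLt]
    calc (k : ℝ) * a m = ∑ _i : Fin k, a m := by
          simp [Finset.sum_const, mul_comm]
      _ ≤ ∑ i, a i := Finset.sum_le_sum fun i _ => hm i (Finset.mem_univ i)
  rw [hS, hM]
  set S := ∑ i ∈ Finset.range k, A i
  have h4 : S * (k - 1) / k = S - S / k := by field_simp
  have h5 : A m.val ≤ S / k := (le_div_iff₀ hk0).mpr (by linarith [hmin])
  linarith [hsel, key]
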